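/- arXiv:2204.11652 — 6 statements merged into one kernel-verified Lean document; each statement's English description precedes it below -/
import Mathlib

section
/- Let E be a real inner product space of finite dimension r. If v₁, …, v_m are vectors in E such that ⟪v_i, v_j⟫ < 0 for all i ≠ j, then m ≤ r + 1. -/
open scoped RealInnerProductSpace

open Finset in
lemma pairwise_neg_inner_aux {E : Type*} [NormedAddCommGroup E]
    [InnerProductSpace ℝ E] {n : ℕ} (v : Fin (n + 1) → E)
    (h : ∀ i j : Fin (n + 1), i ≠ j → ⟪v i, v j⟫ < 0) :
    LinearIndependent ℝ (fun i : Fin n => v i.castSucc) := by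
  rw [Fintype.linearIndependent_iff]
  intro c hc
  set P : Finset (Fin n) := Finset.univ.filter (fun i => 0 < c i) with hP
  set N : Finset (Fin n) := Finset.univ.filter (fun i => c i < 0) with hN
  set w : E := ∑ i ∈ P, c i • v i.castSucc with hw
  have key : w + ∑ i ∈ N, c i • v i.castSucc = 0 := by
    rw [hw, ← hc, ← Finset.sum_filter_add_sum_filter_not Finset.univ (fun i => 0 < c i)]
    congr 1
    refine Finset.sum_subset ?_ ?_
    · intro i hi
      simp only [hN, Finset.mem_filter, Finset.mem_univ, true_and] at hi
      simp only [Finset.mem_filter, Finset.mem_univ, true_and, not_lt]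
      linarith
    · intro i hi hni
      simp only [Finset.mem_filter, Finset.mem_univ, true_and, not_lt] at hi
      simp only [hN, Finset.mem_filter, Finset.mem_univ, true_and, not_lt] at hni
      have : c i = 0 := le_antisymm hi hni
      simp [this]
  have hwN : w = -∑ i ∈ N, c i • v i.castSucc := eq_neg_of_add_eq_zero_left key
  have hinner : ∀ i ∈ P, ∀ j ∈ N, ⟪v i.castSucc, v j.castSucc⟫ < 0 := by
    intro i hi j hj
    apply h
    simp only [hP, hN, Finset.mem_filter] at hi hj
    intro hij
    have : i = j := Fin.castSucc_injective n hij
    subst this; linarith [hi.2, hj.2]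
  have hww : ⟪w, w⟫ ≤ 0 := by
    nth_rewrite 2 [hwN]
    nth_rewrite 1 [hw]
    rw [inner_neg_right, sum_inner, neg_nonpos]
    apply Finset.sum_nonneg
    intro i hi
    rw [real_inner_smul_left, inner_sum]
    apply mul_nonneg
    · simp only [hP, Finset.mem_filter] at hi; linarith [hi.2]
    · apply Finset.sum_nonneg
      intro j hj
      rw [real_inner_smul_right]
      have h1 : c j < 0 := by simp only [hN, Finset.mem_filter] at hj; exact hj.2
      have h2 := hinner i hi j hj
      nlinarith
  have hw0 : w = 0 := by
    have := real_inner_self_nonneg (x := w)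
    exact inner_self_eq_zero.mp (le_antisymm hww this)
  have hlast : ∀ i : Fin n, ⟪v i.castSucc, v (Fin.last n)⟫ < 0 := fun i =>
    h _ _ (ne_of_lt (Fin.castSucc_lt_last i))
  have hPempty : P = ∅ := by
    by_contra hne
    have hPne : P.Nonempty := Finset.nonempty_iff_ne_empty.2 hne
    have h1 : ⟪w, v (Fin.last n)⟫ = 0 := by rw [hw0, inner_zero_left]
    rw [hw, sum_inner] at h1
    have h2 : ∑ i ∈ P, ⟪c i • v i.castSucc, v (Fin.last n)⟫ < 0 := by
      apply Finset.sum_neg _ hPne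
      intro i hi
      rw [real_inner_smul_left]
      have hci : 0 < c i := by simp only [hP, Finset.mem_filter] at hi; exact hi.2
      exact mul_neg_of_pos_of_neg hci (hlast i)
    linarith
  have hNempty : N = ∅ := by
    by_contra hne
    have hNne : N.Nonempty := Finset.nonempty_iff_ne_empty.2 hne
    have hsum : ∑ i ∈ N, c i • v i.castSucc = 0 := by
      have := key; rw [hw0, zero_add] at this; exact this
    have h1 : ⟪∑ i ∈ N, c i • v i.castSucc, v (Fin.last n)⟫ = 0 := by
      rw [hsum, inner_zero_left]
    rw [sum_inner] at h1
    have h2 : 0 < ∑ i ∈ N, ⟪c i • v i.castSucc, v (Fin.last n)⟫ := by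
      apply Finset.sum_pos _ hNne
      intro i hi
      rw [real_inner_smul_left]
      have hci : c i < 0 := by simp only [hN, Finset.mem_filter] at hi; exact hi.2
      exact mul_pos_of_neg_of_neg hci (hlast i)
    linarith
  intro i
  have h1 : i ∉ P := by rw [hPempty]; exact Finset.notMem_empty i
  have h2 : i ∉ N := by rw [hNempty]; exact Finset.notMem_empty i
  simp only [hP, hN, Finset.mem_filter, Finset.mem_univ, true_and, not_lt] at h1 h2
  linarith

/-- A Euclidean vector space of dimension `r` contains at most `r + 1` vectors
which have pairwise negative inner products. -/
theorem pairwise_neg_inner_card_le {E : Type*} [NormedAddCommGroup E]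
    [InnerProductSpace ℝ E] [FiniteDimensional ℝ E] (r : ℕ)
    (hr : Module.finrank ℝ E = r) (m : ℕ) (v : Fin m → E)
    (h : ∀ i j : Fin m, i ≠ j → ⟪v i, v j⟫ < 0) :
    m ≤ r + 1 := by
  by_contra hlt
  push_neg at hlt
  have hle : r + 2 ≤ m := hlt
  set u : Fin (r + 2) → E := fun i => v (Fin.castLE hle i) with hu
  have hu' : ∀ i j : Fin (r + 2), i ≠ j → ⟪u i, u j⟫ < 0 := by
    intro i j hij
    exact h _ _ (fun e => hij (Fin.castLE_injective hle e))
  have li := pairwise_neg_inner_aux u hu'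
  have := li.fintype_card_le_finrank
  simp [hr] at this
end

section
/- Let N ≥ 1, let a, b ∈ U(N) be involutions (a² = 1 and b² = 1), and let U be a connected subset of U(N) such that for every g ∈ U the element a·g·b·g⁻¹ has finite order. Then the order of a·g·b·g⁻¹ is constant for g ∈ U: for all g, h ∈ U, orderOf(a·g·b·g⁻¹) = orderOf(a·h·b·h⁻¹). -/
open Polynomial

lemma eval_charpoly' {n : ℕ} (M : Matrix (Fin n) (Fin n) ℂ) (μ : ℂ) :
    M.charpoly.eval μ = (μ • (1 : Matrix (Fin n) (Fin n) ℂ) - M).det := by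
  rw [Matrix.charpoly, eval_det, Matrix.matPolyEquiv_charmatrix]
  simp [Matrix.smul_eq_diagonal_mul, Matrix.scalar, algebraMap, Pi.algebraMap_def]
  rfl

lemma root_pow_eq_one {n m : ℕ} {M : Matrix (Fin n) (Fin n) ℂ}
    (hM : M ^ m = 1) {μ : ℂ} (hμ : μ ∈ M.charpoly.roots) : μ ^ m = 1 := by
  have h0 : M.charpoly.eval μ = 0 := (isRoot_of_mem_roots hμ)
  rw [eval_charpoly'] at h0
  obtain ⟨v, hv, hmv⟩ := (Matrix.exists_mulVec_eq_zero_iff).2 h0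
  have hMv : M.mulVec v = μ • v := by
    rw [Matrix.sub_mulVec, sub_eq_zero] at hmv
    simpa [Matrix.smul_mulVec, Matrix.one_mulVec] using hmv.symm
  have hpow : ∀ k : ℕ, (M ^ k).mulVec v = μ ^ k • v := by
    intro k; induction k with
    | zero => simp
    | succ k ih =>
      rw [pow_succ, ← Matrix.mulVec_mulVec, hMv, Matrix.mulVec_smul, ih,
        pow_succ, smul_smul, mul_comm]
  have h1 := hpow m
  rw [hM, Matrix.one_mulVec] at h1
  obtain ⟨i, hi⟩ := Function.ne_iff.mp hv
  have h2 : v i = μ ^ m * v i := congrFun h1 i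
  have : (μ ^ m - 1) * v i = 0 := by ring_nf; linear_combination -h2
  rcases mul_eq_zero.mp this with h | h
  · exact sub_eq_zero.mp h
  · exact absurd h hi

lemma unitary_trace_eq_card {n : ℕ} {M : Matrix (Fin n) (Fin n) ℂ}
    (hM : M ∈ Matrix.unitaryGroup (Fin n) ℂ) (h : Matrix.trace M = n) : M = 1 := by
  have hrow : ∀ i, ∑ j, Complex.normSq (M i j) = 1 := by
    intro i
    have h1 : (M * star M) i i = 1 := by
      rw [(Matrix.mem_unitaryGroup_iff).mp hM]; simp
    have h2 : ∑ j, M i j * (starRingEnd ℂ) (M i j) = 1 := by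
      simpa [Matrix.mul_apply, Matrix.star_eq_conjTranspose, Matrix.conjTranspose_apply] using h1
    have := congrArg Complex.re h2
    simpa [Complex.mul_conj, Complex.normSq] using this
  have hns : ∀ i, Complex.normSq (M i i) ≤ 1 := by
    intro i
    rw [← hrow i]
    exact Finset.single_le_sum (f := fun j => Complex.normSq (M i j))
      (fun j _ => Complex.normSq_nonneg _) (Finset.mem_univ i)
  have hre : ∀ i, (M i i).re ≤ 1 := by
    intro i
    have h1 := hns i
    rw [Complex.normSq_apply] at h1
    nlinarith [sq_nonneg ((M i i).im), sq_nonneg ((M i i).re - 1)]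
  have hsum : ∑ i, (M i i).re = n := by
    have := congrArg Complex.re h
    simpa [Matrix.trace] using this
  have hone : ∀ i, (M i i).re = 1 := by
    have hz : ∑ i : Fin n, (1 - (M i i).re) = 0 := by
      rw [Finset.sum_sub_distrib, hsum]; simp
    intro i
    have := (Finset.sum_eq_zero_iff_of_nonneg
      (fun j _ => by linarith [hre j])).mp hz i (Finset.mem_univ i)
    linarith
  have hdiag : ∀ i, M i i = 1 := by
    intro i
    have h1 := hns i
    rw [Complex.normSq_apply, hone i] at h1
    have him : (M i i).im = 0 := by nlinarith [sq_nonneg ((M i i).im)]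
    exact Complex.ext (by rw [hone i]; rfl) (by rw [him]; rfl)
  ext i j
  by_cases hij : i = j
  · subst hij; simp [hdiag i]
  · have h1 := hrow i
    have h2 : Complex.normSq (M i i) = 1 := by rw [hdiag i]; simp
    have h3 : ∑ j ∈ Finset.univ.erase i, Complex.normSq (M i j) = 0 := by
      have he := Finset.add_sum_erase Finset.univ (fun j => Complex.normSq (M i j)) (Finset.mem_univ i)
      rw [← he, h2] at h1
      linarith
    have h4 := (Finset.sum_eq_zero_iff_of_nonneg
      (fun k _ => Complex.normSq_nonneg (M i k))).mp h3 j
      (Finset.mem_erase.mpr ⟨fun hh => hij hh.symm, Finset.mem_univ j⟩)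
    have : M i j = 0 := Complex.normSq_eq_zero.mp h4
    simp [this, Matrix.one_apply_ne hij]

lemma rootsOfUnitySet_countable :
    Set.Countable {z : ℂ | ∃ m : ℕ, 0 < m ∧ z ^ m = 1} := by
  have hsub : {z : ℂ | ∃ m : ℕ, 0 < m ∧ z ^ m = 1} ⊆ ⋃ m : ℕ, {z : ℂ | z ^ (m + 1) = 1} := by
    rintro z ⟨m, hm, hz⟩
    exact Set.mem_iUnion.mpr ⟨m - 1, by rwa [Nat.sub_add_cancel hm]⟩
  refine Set.Countable.mono hsub (Set.countable_iUnion fun m => Set.Finite.countable ?_)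
  have hne : (Polynomial.X ^ (m + 1) - 1 : Polynomial ℂ) ≠ 0 := by
    intro hp
    have h2 := congrArg (fun q => Polynomial.coeff q (m+1)) hp
    simp [Polynomial.coeff_X_pow, Polynomial.coeff_one] at h2
  refine (Polynomial.finite_setOf_isRoot hne).subset ?_
  intro z hz
  simp only [Set.mem_setOf_eq, Polynomial.IsRoot, Polynomial.eval_sub, Polynomial.eval_pow,
    Polynomial.eval_X, Polynomial.eval_one, hz.out, sub_self]

lemma sums_countable {R : Set ℂ} (hR : R.Countable) :
    Set.Countable (Multiset.sum '' {s : Multiset ℂ | ∀ x ∈ s, x ∈ R}) := by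
  haveI := hR.to_subtype
  have hT : {s : Multiset ℂ | ∀ x ∈ s, x ∈ R} ⊆
      Set.range (fun s : Multiset R => s.map Subtype.val) := by
    intro s hs
    refine ⟨s.attach.map (fun x => (⟨x.1, hs x.1 x.2⟩ : R)), ?_⟩
    simp [Multiset.map_map]
  exact ((Set.countable_range _).mono hT).image _

lemma preconnected_countable_subsingleton {s : Set ℂ}
    (hs : IsPreconnected s) (hc : s.Countable) : s.Subsingleton := by
  intro x hx y hy
  by_contra hxy
  set f : ℂ → ℝ := fun z => ‖z - x‖ with hf
  have h1 : IsPreconnected (f '' s) :=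
    hs.image f ((continuous_norm.comp (continuous_id.sub continuous_const)).continuousOn)
  have h0 : (0 : ℝ) ∈ f '' s := ⟨x, hx, by simp [hf]⟩
  have hr : ‖y - x‖ ∈ f '' s := ⟨y, hy, rfl⟩
  have hpos : 0 < ‖y - x‖ := by
    simpa [sub_eq_zero] using (norm_pos_iff.mpr (sub_ne_zero.mpr (Ne.symm hxy)))
  have hIcc := h1.Icc_subset h0 hr
  have hcc : (Set.Icc (0:ℝ) ‖y - x‖).Countable := (hc.image f).mono hIcc
  haveI := hcc.to_subtype
  have := Cardinal.mk_Icc_real hpos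
  have hle : (Cardinal.mk (Set.Icc (0:ℝ) ‖y - x‖)) ≤ Cardinal.aleph0 :=
    Cardinal.mk_le_aleph0
  rw [this] at hle
  exact absurd hle (not_le.mpr Cardinal.aleph0_lt_continuum)


open Polynomial in
/-- trace of a finite-order complex matrix is a sum of roots of unity -/
lemma trace_mem_sums {n : ℕ} {M : Matrix (Fin n) (Fin n) ℂ} {k : ℕ} (hk : 0 < k)
    (hM : M ^ k = 1) :
    Matrix.trace M ∈ Multiset.sum ''
      {s : Multiset ℂ | ∀ x ∈ s, x ∈ {z : ℂ | ∃ m : ℕ, 0 < m ∧ z ^ m = 1}} := by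
  refine ⟨M.charpoly.roots, fun x hx => ⟨k, hk, root_pow_eq_one hM hx⟩, ?_⟩
  exact (Matrix.trace_eq_sum_roots_charpoly M).symm

/-- If `a` and `b` are involutions in `U(N)` and `a * g * b * g⁻¹` has finite
order for every `g` in a connected subset `U`, then this order is constant on
`U`. -/
theorem orderOf_conj_prod_constant_on_connected (N : ℕ) (hN : 1 ≤ N)
    (a b : Matrix.unitaryGroup (Fin N) ℂ) (ha : a ^ 2 = 1) (hb : b ^ 2 = 1)
    (U : Set (Matrix.unitaryGroup (Fin N) ℂ)) (hU : IsConnected U)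
    (hfin : ∀ g ∈ U, IsOfFinOrder (a * g * b * g⁻¹)) :
    ∀ g ∈ U, ∀ h ∈ U,
      orderOf (a * g * b * g⁻¹) = orderOf (a * h * b * h⁻¹) := by
  set S : Set ℂ := Multiset.sum ''
      {s : Multiset ℂ | ∀ x ∈ s, x ∈ {z : ℂ | ∃ m : ℕ, 0 < m ∧ z ^ m = 1}} with hS
  have hSc : S.Countable := sums_countable rootsOfUnitySet_countable
  set x : Matrix.unitaryGroup (Fin N) ℂ → Matrix.unitaryGroup (Fin N) ℂ :=
    fun u => a * u * b * u⁻¹ with hx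
  -- the trace functions
  set F : ℕ → Matrix.unitaryGroup (Fin N) ℂ → ℂ :=
    fun m u => Matrix.trace ((((a : Matrix (Fin N) (Fin N) ℂ) * (u : Matrix (Fin N) (Fin N) ℂ) * (b : Matrix (Fin N) (Fin N) ℂ) * star (u : Matrix (Fin N) (Fin N) ℂ))) ^ m) with hF
  have hcoe : ∀ (u : Matrix.unitaryGroup (Fin N) ℂ) (m : ℕ),
      ((x u ^ m : Matrix.unitaryGroup (Fin N) ℂ) : Matrix (Fin N) (Fin N) ℂ) =
        ((a : Matrix (Fin N) (Fin N) ℂ) * (u : Matrix (Fin N) (Fin N) ℂ) * (b : Matrix (Fin N) (Fin N) ℂ) * star (u : Matrix (Fin N) (Fin N) ℂ)) ^ m := by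
    intro u m
    rfl
  have hcont : ∀ m : ℕ, Continuous (F m) := by
    intro m
    refine Continuous.matrix_trace (Continuous.pow ?_ m)
    have hval : Continuous (fun u : Matrix.unitaryGroup (Fin N) ℂ =>
        (u : Matrix (Fin N) (Fin N) ℂ)) := continuous_subtype_val
    simp only [Matrix.star_eq_conjTranspose]
    exact ((continuous_const.matrix_mul hval).matrix_mul continuous_const).matrix_mul
      hval.matrix_conjTranspose
  have hmem : ∀ m : ℕ, ∀ u ∈ U, F m u ∈ S := by
    intro m u hu
    have hk : 0 < orderOf (x u) := (hfin u hu).orderOf_pos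
    have hpow : (((a : Matrix (Fin N) (Fin N) ℂ) * (u : Matrix (Fin N) (Fin N) ℂ) * (b : Matrix (Fin N) (Fin N) ℂ) * star (u : Matrix (Fin N) (Fin N) ℂ)) ^ m)
        ^ orderOf (x u) = 1 := by
      rw [← hcoe u m, ← SubmonoidClass.coe_pow, ← pow_mul, mul_comm, pow_mul,
        pow_orderOf_eq_one, one_pow, OneMemClass.coe_one]
    exact trace_mem_sums hk hpow
  have hconst : ∀ m : ℕ, ∀ g ∈ U, ∀ h ∈ U, F m g = F m h := by
    intro m g hg h hh
    have himg : IsPreconnected (F m '' U) :=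
      hU.isPreconnected.image (F m) (hcont m).continuousOn
    have hcc : (F m '' U).Countable :=
      hSc.mono (by rintro z ⟨u, hu, rfl⟩; exact hmem m u hu)
    exact preconnected_countable_subsingleton himg hcc ⟨g, hg, rfl⟩ ⟨h, hh, rfl⟩
  intro g hg h hh
  rw [orderOf_eq_orderOf_iff]
  intro m
  have hiff : ∀ u ∈ U, (x u ^ m = 1 ↔ F m u = N) := by
    intro u hu
    constructor
    · intro h1
      have : ((x u ^ m : Matrix.unitaryGroup (Fin N) ℂ) : Matrix (Fin N) (Fin N) ℂ) = 1 := by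
        rw [h1, OneMemClass.coe_one]
      rw [hF]
      simp only [← hcoe u m, this, Matrix.trace_one]
      simp
    · intro h1
      have hmem1 : ((x u ^ m : Matrix.unitaryGroup (Fin N) ℂ) : Matrix (Fin N) (Fin N) ℂ)
          ∈ Matrix.unitaryGroup (Fin N) ℂ := (x u ^ m).2
      have h2 : ((x u ^ m : Matrix.unitaryGroup (Fin N) ℂ) : Matrix (Fin N) (Fin N) ℂ) = 1 := by
        refine unitary_trace_eq_card hmem1 ?_
        rw [hcoe u m]
        exact h1
      exact Subtype.ext h2
  rw [hiff g hg, hiff h hh, hconst m g hg h hh]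
end

section
/- Let a and b be nontrivial involutions in SO(3), i.e. real orthogonal 3×3 matrices of determinant 1 with a² = 1, a ≠ 1, b² = 1, b ≠ 1. Then there exists g ∈ SO(3) such that a·g·b·g⁻¹ has infinite order (is not of finite order). -/
open Matrix Real

noncomputable section
namespace SO3A


def D : Matrix (Fin 3) (Fin 3) ℝ := !![1,0,0; 0,-1,0; 0,0,-1]

def Rz (t : ℝ) : Matrix (Fin 3) (Fin 3) ℝ :=
  !![Real.cos t, -Real.sin t, 0; Real.sin t, Real.cos t, 0; 0,0,1]

lemma Rz_mul (s t : ℝ) : Rz s * Rz t = Rz (s + t) := by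
  simp only [Rz, Matrix.mul_fin_three]
  ext i j
  fin_cases i <;> fin_cases j <;>
    simp [Real.cos_add, Real.sin_add] <;> ring

lemma Rz_zero : Rz 0 = 1 := by
  simp only [Rz, Matrix.one_fin_three]
  norm_num

lemma star_Rz (t : ℝ) : star (Rz t) = Rz (-t) := by
  rw [Matrix.eta_fin_three (star (Rz t))]
  simp only [Rz, Matrix.star_apply]
  ext i j
  fin_cases i <;> fin_cases j <;> (try simp [Matrix.vecHead, Matrix.vecTail])

lemma star_D : star D = D := by
  rw [Matrix.eta_fin_three (star D)]
  simp only [D, Matrix.star_apply]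
  ext i j
  fin_cases i <;> fin_cases j <;> (try simp [Matrix.vecHead, Matrix.vecTail])

lemma D_mul_Rz_mul_D (t : ℝ) : D * Rz t * D = Rz (-t) := by
  simp only [D, Rz, Matrix.mul_fin_three]
  ext i j
  fin_cases i <;> fin_cases j <;> (try simp [Matrix.vecHead, Matrix.vecTail])

lemma Rz_mem (t : ℝ) : Rz t ∈ Matrix.orthogonalGroup (Fin 3) ℝ := by
  rw [Matrix.mem_orthogonalGroup_iff, ← Matrix.conjTranspose_eq_transpose_of_trivial,
    ← Matrix.star_eq_conjTranspose, star_Rz, Rz_mul, add_neg_cancel, Rz_zero]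

lemma D_mem : D ∈ Matrix.orthogonalGroup (Fin 3) ℝ := by
  rw [Matrix.mem_orthogonalGroup_iff, ← Matrix.conjTranspose_eq_transpose_of_trivial,
    ← Matrix.star_eq_conjTranspose, star_D]
  simp only [D, Matrix.mul_fin_three, Matrix.one_fin_three]
  norm_num

lemma Rz_det (t : ℝ) : (Rz t).det = 1 := by
  simp [Rz, Matrix.det_fin_three]
  nlinarith [Real.sin_sq_add_cos_sq t]

lemma Rz_pow (t : ℝ) (n : ℕ) : (Rz t) ^ n = Rz (n * t) := by
  induction n with
  | zero => simp [Rz_zero]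
  | succ n ih => rw [pow_succ, ih, Rz_mul]; push_cast; ring_nf

lemma Rz_eq_one_imp {t : ℝ} (h : Rz t = 1) : Real.cos t = 1 := by
  have := congrArg (fun M => M 0 0) h
  simpa [Rz, Matrix.one_apply] using this



lemma diag_eq (e : Fin 3 → ℝ) :
    Matrix.diagonal e = !![e 0,0,0; 0,e 1,0; 0,0,e 2] := by
  rw [Matrix.eta_fin_three (Matrix.diagonal e)]
  ext i j
  fin_cases i <;> fin_cases j <;>
    (try simp [Matrix.diagonal_apply, Matrix.vecHead, Matrix.vecTail])

-- det sign correction matrix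
def F : Matrix (Fin 3) (Fin 3) ℝ := !![1,0,0; 0,1,0; 0,0,-1]

lemma star_F : star F = F := by
  rw [Matrix.eta_fin_three (star F)]
  simp only [F, Matrix.star_apply]
  ext i j
  fin_cases i <;> fin_cases j <;> (try simp [Matrix.vecHead, Matrix.vecTail])

lemma F_mem : F ∈ Matrix.orthogonalGroup (Fin 3) ℝ := by
  rw [Matrix.mem_orthogonalGroup_iff, ← Matrix.conjTranspose_eq_transpose_of_trivial,
    ← Matrix.star_eq_conjTranspose, star_F]
  simp only [F, Matrix.mul_fin_three, Matrix.one_fin_three]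
  norm_num

lemma F_det : F.det = -1 := by simp [F, Matrix.det_fin_three]

lemma F_conj : F * D * star F = D := by
  rw [star_F]
  simp only [F, D, Matrix.mul_fin_three]
  norm_num

lemma conj_helper (a U' P : Matrix (Fin 3) (Fin 3) ℝ)
    (h : a = U' * (P * D * star P) * star U') :
    a = (U' * P) * D * star (U' * P) := by
  rw [h, Matrix.star_mul]
  simp only [Matrix.mul_assoc]

lemma det_pm {h : Matrix (Fin 3) (Fin 3) ℝ}
    (hh : h ∈ Matrix.orthogonalGroup (Fin 3) ℝ) : h.det = 1 ∨ h.det = -1 := by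
  have := congrArg Matrix.det (((Matrix.mem_orthogonalGroup_iff (Fin 3) ℝ).mp hh))
  rw [Matrix.det_mul, Matrix.det_one,
    Matrix.det_transpose] at this
  exact mul_self_eq_one_iff.mp this

lemma fix_det (a h : Matrix (Fin 3) (Fin 3) ℝ)
    (hh : h ∈ Matrix.orthogonalGroup (Fin 3) ℝ)
    (key : a = h * D * star h) :
    ∃ h', h' ∈ Matrix.orthogonalGroup (Fin 3) ℝ ∧ h'.det = 1 ∧
      a = h' * D * star h' := by
  rcases det_pm hh with hd | hd
  · exact ⟨h, hh, hd, key⟩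
  · refine ⟨h * F, mul_mem hh F_mem, ?_, ?_⟩
    · rw [Matrix.det_mul, hd, F_det]; norm_num
    · rw [conj_helper a h F (by rw [F_conj]; exact key)]



lemma step1 (a : Matrix (Fin 3) (Fin 3) ℝ)
    (ha : a ∈ Matrix.orthogonalGroup (Fin 3) ℝ)
    (hdet : a.det = 1) (ha2 : a * a = 1) (ha1 : a ≠ 1) :
    ∃ h, h ∈ Matrix.orthogonalGroup (Fin 3) ℝ ∧ h.det = 1 ∧
      a = h * D * star h := by
  have h1 : star a * a = 1 := ((Matrix.mem_orthogonalGroup_iff' (Fin 3) ℝ).mp ha)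
  have hstar : star a = a := by
    calc star a = star a * (a * a) := by rw [ha2, mul_one]
    _ = (star a * a) * a := by rw [mul_assoc]
    _ = a := by rw [h1, one_mul]
  have hsym : a.IsHermitian := by
    rwa [Matrix.IsHermitian, ← Matrix.star_eq_conjTranspose]
  set U : Matrix (Fin 3) (Fin 3) ℝ := (hsym.eigenvectorUnitary : Matrix (Fin 3) (Fin 3) ℝ) with hU
  have hUmem : U ∈ Matrix.unitaryGroup (Fin 3) ℝ := (hsym.eigenvectorUnitary).2
  set e : Fin 3 → ℝ := hsym.eigenvalues with he
  have hof : (RCLike.ofReal ∘ e : Fin 3 → ℝ) = e := by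
    funext i; simp
  have hspec : a = U * Matrix.diagonal e * star U := by
    have := hsym.spectral_theorem
    rwa [hof] at this
  have hdiagU : star U * a * U = Matrix.diagonal e := by
    have hUU0 : star U * U = 1 := ((Matrix.mem_unitaryGroup_iff').mp hUmem)
    rw [hspec]; simp only [← Matrix.mul_assoc, hUU0, Matrix.one_mul]
    simp only [Matrix.mul_assoc, hUU0, Matrix.mul_one]
  have hUU : star U * U = 1 := ((Matrix.mem_unitaryGroup_iff').mp hUmem)
  have hUU' : U * star U = 1 := ((Matrix.mem_unitaryGroup_iff).mp hUmem)
  have hdd : Matrix.diagonal e * Matrix.diagonal e = 1 := by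
    calc Matrix.diagonal e * Matrix.diagonal e
        = (star U * a * U) * (star U * a * U) := by rw [hdiagU]
      _ = star U * a * (U * star U) * a * U := by
          simp only [Matrix.mul_assoc]
      _ = star U * (a * a) * U := by rw [hUU']; simp only [Matrix.mul_assoc, Matrix.one_mul]
      _ = 1 := by rw [ha2, Matrix.mul_one, hUU]
  have hsq : ∀ i, e i = 1 ∨ e i = -1 := by
    intro i
    have := congrArg (fun M => M i i) hdd
    simp only [Matrix.mul_apply, Matrix.diagonal_apply, Matrix.one_apply] at this
    refine mul_self_eq_one_iff.mp ?_
    simpa using this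
  have hprod : e 0 * e 1 * e 2 = 1 := by
    have := hsym.det_eq_prod_eigenvalues
    rw [hdet] at this
    have := this.symm
    rw [Fin.prod_univ_three] at this
    exact_mod_cast this
  have hne : ¬ (e 0 = 1 ∧ e 1 = 1 ∧ e 2 = 1) := by
    rintro ⟨h0, h1', h2⟩
    apply ha1
    have : Matrix.diagonal e = 1 := by
      rw [diag_eq, h0, h1', h2, Matrix.one_fin_three]
    rw [hspec, this, Matrix.mul_one, hUU']
  -- the three permutation matrices
  rcases hsq 0 with e0 | e0 <;> rcases hsq 1 with e1 | e1 <;> rcases hsq 2 with e2 | e2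
  · exact absurd ⟨e0, e1, e2⟩ hne
  · rw [e0, e1, e2] at hprod; norm_num at hprod
  · rw [e0, e1, e2] at hprod; norm_num at hprod
  · -- e = (1, -1, -1) : P = 1
    have hDe : Matrix.diagonal e = D := by
      rw [diag_eq, e0, e1, e2]; rfl
    refine fix_det a U hUmem ?_
    rw [hspec, hDe]
  · rw [e0, e1, e2] at hprod; norm_num at hprod
  · -- e = (-1, 1, -1) : P = swap 0 1
    have hDe : Matrix.diagonal e =
        !![0,1,0;1,0,0;0,0,1] * D * star !![0,1,0;1,0,0;0,0,1] := by
      rw [diag_eq, e0, e1, e2]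
      rw [Matrix.eta_fin_three (star !![(0:ℝ),1,0;1,0,0;0,0,1])]
      simp only [Matrix.star_apply, D, Matrix.mul_fin_three]
      norm_num
      simp [Matrix.vecHead, Matrix.vecTail]
    refine fix_det a (U * !![0,1,0;1,0,0;0,0,1]) ?_ (conj_helper a U _ (by rw [← hDe]; exact hspec))
    refine mul_mem hUmem ?_
    rw [Matrix.mem_orthogonalGroup_iff, ← Matrix.conjTranspose_eq_transpose_of_trivial,
      ← Matrix.star_eq_conjTranspose]
    rw [Matrix.eta_fin_three (star !![(0:ℝ),1,0;1,0,0;0,0,1])]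
    simp only [Matrix.star_apply]
    norm_num [Matrix.mul_fin_three, Matrix.one_fin_three]
    rw [Matrix.one_fin_three]
    ext i j
    fin_cases i <;> fin_cases j <;> (try simp [Matrix.vecHead, Matrix.vecTail])
  · -- e = (-1, -1, 1) : P = swap 0 2
    have hDe : Matrix.diagonal e =
        !![0,0,1;0,1,0;1,0,0] * D * star !![0,0,1;0,1,0;1,0,0] := by
      rw [diag_eq, e0, e1, e2]
      rw [Matrix.eta_fin_three (star !![(0:ℝ),0,1;0,1,0;1,0,0])]
      simp only [Matrix.star_apply, D, Matrix.mul_fin_three]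
      norm_num
      simp [Matrix.vecHead, Matrix.vecTail]
    refine fix_det a (U * !![0,0,1;0,1,0;1,0,0]) ?_ (conj_helper a U _ (by rw [← hDe]; exact hspec))
    refine mul_mem hUmem ?_
    rw [Matrix.mem_orthogonalGroup_iff, ← Matrix.conjTranspose_eq_transpose_of_trivial,
      ← Matrix.star_eq_conjTranspose]
    rw [Matrix.eta_fin_three (star !![(0:ℝ),0,1;0,1,0;1,0,0])]
    simp only [Matrix.star_apply]
    norm_num [Matrix.mul_fin_three, Matrix.one_fin_three]
    rw [Matrix.one_fin_three]
    ext i j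
    fin_cases i <;> fin_cases j <;> (try simp [Matrix.vecHead, Matrix.vecTail])
  · rw [e0, e1, e2] at hprod; norm_num at hprod


end SO3A
end

open SO3A in
/-- For nontrivial involutions `a`, `b` in `SO(3)` there exists `g ∈ SO(3)` such
that `a * g * b * g⁻¹` has infinite order. -/
theorem so3_exists_conj_infinite_order (a b : Matrix.orthogonalGroup (Fin 3) ℝ)
    (hadet : (a : Matrix (Fin 3) (Fin 3) ℝ).det = 1)
    (hbdet : (b : Matrix (Fin 3) (Fin 3) ℝ).det = 1)
    (ha2 : a ^ 2 = 1) (ha1 : a ≠ 1) (hb2 : b ^ 2 = 1) (hb1 : b ≠ 1) :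
    ∃ g : Matrix.orthogonalGroup (Fin 3) ℝ,
      (g : Matrix (Fin 3) (Fin 3) ℝ).det = 1 ∧
      ¬ IsOfFinOrder (a * g * b * g⁻¹) := by
  have ha2' : (a : Matrix (Fin 3) (Fin 3) ℝ) * a = 1 := by
    have := congrArg Subtype.val ha2
    rwa [pow_two] at this
  have hb2' : (b : Matrix (Fin 3) (Fin 3) ℝ) * b = 1 := by
    have := congrArg Subtype.val hb2
    rwa [pow_two] at this
  have ha1' : (a : Matrix (Fin 3) (Fin 3) ℝ) ≠ 1 := fun h => ha1 (Subtype.ext h)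
  have hb1' : (b : Matrix (Fin 3) (Fin 3) ℝ) ≠ 1 := fun h => hb1 (Subtype.ext h)
  obtain ⟨hA, hAmem, hAdet, hAkey⟩ := SO3A.step1 a a.2 hadet ha2' ha1'
  obtain ⟨hB, hBmem, hBdet, hBkey⟩ := SO3A.step1 b b.2 hbdet hb2' hb1'
  let sA : Matrix.orthogonalGroup (Fin 3) ℝ := ⟨hA, hAmem⟩
  let sB : Matrix.orthogonalGroup (Fin 3) ℝ := ⟨hB, hBmem⟩
  let u : Matrix.orthogonalGroup (Fin 3) ℝ := ⟨Rz 1, Rz_mem 1⟩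
  let d : Matrix.orthogonalGroup (Fin 3) ℝ := ⟨D, D_mem⟩
  let w : Matrix.orthogonalGroup (Fin 3) ℝ := ⟨Rz (-2), Rz_mem (-2)⟩
  have haconj : a = sA * d * sA⁻¹ := Subtype.ext hAkey
  have hbconj : b = sB * d * sB⁻¹ := Subtype.ext hBkey
  have hw : d * u * d * u⁻¹ = w := by
    apply Subtype.ext
    show D * Rz 1 * D * star (Rz 1) = Rz (-2)
    rw [star_Rz, D_mul_Rz_mul_D 1, Rz_mul]
    norm_num
  refine ⟨sA * u * sB⁻¹, ?_, ?_⟩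
  · show (hA * Rz 1 * star hB).det = 1
    rw [Matrix.det_mul, Matrix.det_mul, Matrix.star_eq_conjTranspose,
      Matrix.det_conjTranspose, star_trivial, hAdet, hBdet, Rz_det]
    norm_num
  · have hkey : a * (sA * u * sB⁻¹) * b * (sA * u * sB⁻¹)⁻¹ = sA * w * sA⁻¹ := by
      rw [haconj, hbconj, ← hw]
      group
    rw [hkey]
    rintro hfin
    obtain ⟨n, hn, hpow⟩ := isOfFinOrder_iff_pow_eq_one.mp hfin
    have hconjpow : ∀ m : ℕ, (sA * w * sA⁻¹) ^ m = sA * w ^ m * sA⁻¹ := by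
      intro m
      induction m with
      | zero => group
      | succ m ih => rw [pow_succ, ih, pow_succ]; group
    rw [hconjpow n] at hpow
    have hwn : w ^ n = 1 := by
      have : sA⁻¹ * (sA * w ^ n * sA⁻¹) * sA = sA⁻¹ * 1 * sA := by rw [hpow]
      group at this
      simpa using this
    have hmat : (Rz (-2)) ^ n = 1 := by
      have := congrArg Subtype.val hwn
      rwa [SubmonoidClass.coe_pow] at this
    rw [Rz_pow] at hmat
    have hcos : Real.cos ((n : ℝ) * (-2)) = 1 := Rz_eq_one_imp hmat
    obtain ⟨k, hk⟩ := (Real.cos_eq_one_iff _).mp hcos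
    have hk0 : (k : ℝ) ≠ 0 := by
      intro h0
      rw [h0, zero_mul] at hk
      have hn' : (n : ℝ) ≠ 0 := Nat.cast_ne_zero.mpr hn.ne'
      have : (n : ℝ) * (-2) ≠ 0 := by
        intro h; rcases mul_eq_zero.mp h with h | h
        · exact hn' h
        · norm_num at h
      exact this hk.symm
    have hpi : Real.pi = ((-(n : ℤ)) : ℝ) / (k : ℝ) := by
      have hpos : Real.pi ≠ 0 := Real.pi_ne_zero
      field_simp
      push_cast
      nlinarith [hk]
    refine (irrational_iff_ne_rational Real.pi).mp irrational_pi (-(n : ℤ)) k (by exact_mod_cast hk0) ?_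
    rw [hpi]
    norm_num
end

section
/- Let a and b be nontrivial involutions in SU(3), i.e. elements of the special unitary group of 3×3 complex matrices with a² = 1, a ≠ 1, b² = 1, b ≠ 1. Then there exists g ∈ SU(3) such that a·g·b·g⁻¹ has infinite order (is not of finite order). -/
set_option linter.unusedTactic false
set_option linter.unreachableTactic false
set_option linter.unnecessarySeqFocus false
set_option maxHeartbeats 1000000
section SU3Aux
open Complex Matrix

-- the key arithmetic lemma: (-7+24i)/25 is not a root of unity
lemma gauss_pow (n : ℕ) : ∃ p q : ℤ, ((-7:ℂ) + 24*I)^n = p + q*I ∧ ((p + 2*q : ℤ) : ZMod 5) = 1 := by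
  induction n with
  | zero => exact ⟨1, 0, by norm_num, by norm_num⟩
  | succ n ih =>
    obtain ⟨p, q, h1, h2⟩ := ih
    refine ⟨-7*p - 24*q, 24*p - 7*q, ?_, ?_⟩
    · rw [pow_succ, h1]
      push_cast
      ring_nf
      rw [Complex.I_sq]
      ring
    · push_cast
      push_cast at h2
      linear_combination h2 + (8*(p:ZMod 5) - 8*(q:ZMod 5)) * (by decide : (5:ZMod 5) = 0)

lemma z_pow_ne_one (n : ℕ) (hn : n ≠ 0) : ((-7 + 24*I)/25)^n ≠ 1 := by
  intro h
  obtain ⟨p, q, h1, h2⟩ := gauss_pow n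
  rw [div_pow, div_eq_one_iff_eq (by norm_num)] at h
  rw [h1] at h
  have h' : (p:ℂ) + q*I = (((25:ℝ)^n : ℝ) : ℂ) := by rw [h]; push_cast; ring
  have hq : (q:ℝ) = 0 := by
    have h2 : ((p:ℂ) + q*I).im = (((25:ℝ)^n : ℝ) : ℂ).im := by rw [h']
    rw [Complex.ofReal_im] at h2
    simpa using h2
  have hp : (p:ℝ) = (25:ℝ)^n := by
    have h2 : ((p:ℂ) + q*I).re = (((25:ℝ)^n : ℝ) : ℂ).re := by rw [h']
    rw [Complex.ofReal_re] at h2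
    simpa using h2
  have hq' : q = 0 := by exact_mod_cast hq
  have hp' : p = 25^n := by exact_mod_cast hp
  subst hq' hp'
  rw [show ((25:ℤ)^n + 2*0 : ℤ) = 25^n by ring] at h2
  push_cast at h2
  rw [show ((25:ZMod 5)) = 0 by decide, zero_pow hn] at h2
  exact absurd h2 (by decide)

noncomputable def D0 : Matrix (Fin 3) (Fin 3) ℂ := !![1,0,0; 0,-1,0; 0,0,-1]
noncomputable def h0 : Matrix (Fin 3) (Fin 3) ℂ := !![3/5, -4/5, 0; 4/5, 3/5, 0; 0, 0, 1]
noncomputable def M0 : Matrix (Fin 3) (Fin 3) ℂ := D0 * h0 * D0 * star h0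

lemma star_h0 : star h0 = !![3/5, 4/5, 0; -4/5, 3/5, 0; 0, 0, 1] := by
  ext i j
  fin_cases i <;> fin_cases j <;>
    simp [h0, Matrix.star_apply, Matrix.conjTranspose_apply, map_div₀] <;> norm_num

lemma star_D0 : star D0 = D0 := by
  ext i j
  fin_cases i <;> fin_cases j <;>
    simp [D0, Matrix.star_apply, Matrix.conjTranspose_apply, Matrix.vecHead, Matrix.vecTail]

lemma D0_mem : D0 ∈ Matrix.unitaryGroup (Fin 3) ℂ := by
  rw [Matrix.mem_unitaryGroup_iff, star_D0]
  ext i j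
  fin_cases i <;> fin_cases j <;>
    simp [D0, Matrix.mul_apply, Fin.sum_univ_three, Matrix.vecHead, Matrix.vecTail]

lemma h0_mem : h0 ∈ Matrix.unitaryGroup (Fin 3) ℂ := by
  rw [Matrix.mem_unitaryGroup_iff, star_h0]
  ext i j
  fin_cases i <;> fin_cases j <;>
    simp [h0, Matrix.mul_apply, Fin.sum_univ_three] <;> norm_num

lemma M0_eq : M0 = !![-7/25, 24/25, 0; -24/25, -7/25, 0; 0,0,1] := by
  rw [M0, star_h0]
  ext i j
  fin_cases i <;> fin_cases j <;>
    simp [D0, h0, Matrix.mul_apply, Fin.sum_univ_three] <;> norm_num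

lemma det_h0 : h0.det = 1 := by
  rw [h0, Matrix.det_fin_three]
  simp; norm_num

lemma M0_mulVec : M0 *ᵥ ![1, I, 0] = ((-7 + 24*I)/25) • ![1, I, 0] := by
  rw [M0_eq]
  funext i
  fin_cases i <;>
    simp [Matrix.mulVec, dotProduct, Fin.sum_univ_three, Complex.I_sq] <;> ring_nf <;>
      simp [Complex.I_sq] <;> ring

lemma M0_pow_mulVec (n : ℕ) : M0^n *ᵥ ![1, I, 0] = (((-7 + 24*I)/25)^n) • ![1, I, 0] := by
  induction n with
  | zero => simp
  | succ n ih =>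
    rw [pow_succ', pow_succ', ← Matrix.mulVec_mulVec, ih, Matrix.mulVec_smul, M0_mulVec,
      smul_smul, mul_comm]

lemma M0_pow_ne_one (n : ℕ) (hn : n ≠ 0) : M0 ^ n ≠ 1 := by
  intro h
  have hv := M0_pow_mulVec n
  rw [h, Matrix.one_mulVec] at hv
  have h00 := congrFun hv 0
  simp at h00
  exact z_pow_ne_one n hn h00.symm

noncomputable def S1 : Matrix (Fin 3) (Fin 3) ℂ := !![0,1,0; 1,0,0; 0,0,1]
noncomputable def S2 : Matrix (Fin 3) (Fin 3) ℂ := !![0,0,1; 0,1,0; 1,0,0]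

lemma star_S1 : star S1 = S1 := by
  ext i j
  fin_cases i <;> fin_cases j <;>
    simp [S1, Matrix.star_apply, Matrix.conjTranspose_apply, Matrix.vecHead, Matrix.vecTail]

lemma star_S2 : star S2 = S2 := by
  ext i j
  fin_cases i <;> fin_cases j <;>
    simp [S2, Matrix.star_apply, Matrix.conjTranspose_apply, Matrix.vecHead, Matrix.vecTail]

lemma S1_mem : S1 ∈ Matrix.unitaryGroup (Fin 3) ℂ := by
  rw [Matrix.mem_unitaryGroup_iff, star_S1]
  ext i j
  fin_cases i <;> fin_cases j <;>
    simp [S1, Matrix.mul_apply, Fin.sum_univ_three, Matrix.vecHead, Matrix.vecTail]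

lemma S2_mem : S2 ∈ Matrix.unitaryGroup (Fin 3) ℂ := by
  rw [Matrix.mem_unitaryGroup_iff, star_S2]
  ext i j
  fin_cases i <;> fin_cases j <;>
    simp [S2, Matrix.mul_apply, Fin.sum_univ_three, Matrix.vecHead, Matrix.vecTail]

lemma diagA : Matrix.diagonal (![1,-1,-1] : Fin 3 → ℂ) = D0 := by
  ext i j
  fin_cases i <;> fin_cases j <;>
    simp [D0, Matrix.diagonal, Matrix.vecHead, Matrix.vecTail]

lemma diagB : Matrix.diagonal (![-1,1,-1] : Fin 3 → ℂ) = S1 * D0 * star S1 := by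
  rw [star_S1]
  ext i j
  fin_cases i <;> fin_cases j <;>
    simp [D0, S1, Matrix.diagonal, Matrix.mul_apply, Fin.sum_univ_three,
      Matrix.vecHead, Matrix.vecTail]

lemma diagC : Matrix.diagonal (![-1,-1,1] : Fin 3 → ℂ) = S2 * D0 * star S2 := by
  rw [star_S2]
  ext i j
  fin_cases i <;> fin_cases j <;>
    simp [D0, S2, Matrix.diagonal, Matrix.mul_apply, Fin.sum_univ_three,
      Matrix.vecHead, Matrix.vecTail]

lemma exists_conj_D0 (a : Matrix.unitaryGroup (Fin 3) ℂ)
    (hdet : (a : Matrix (Fin 3) (Fin 3) ℂ).det = 1)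
    (h2 : a ^ 2 = 1) (h1 : a ≠ 1) :
    ∃ U : Matrix.unitaryGroup (Fin 3) ℂ,
      (a : Matrix (Fin 3) (Fin 3) ℂ)
        = U * D0 * star (U : Matrix (Fin 3) (Fin 3) ℂ) := by
  have hA2 : (a : Matrix (Fin 3) (Fin 3) ℂ) * a = 1 := by
    have := congrArg (Subtype.val) h2
    simpa [pow_two] using this
  have hst : star (a : Matrix (Fin 3) (Fin 3) ℂ) * a = 1 := a.2.1
  have hH : (a : Matrix (Fin 3) (Fin 3) ℂ).IsHermitian := by
    have : star (a : Matrix (Fin 3) (Fin 3) ℂ) = a := by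
      calc star (a : Matrix (Fin 3) (Fin 3) ℂ)
          = star (a : Matrix (Fin 3) (Fin 3) ℂ) * ((a : Matrix (Fin 3) (Fin 3) ℂ) * a) := by
            rw [hA2, mul_one]
        _ = (star (a : Matrix (Fin 3) (Fin 3) ℂ) * a) * a := by rw [mul_assoc]
        _ = a := by rw [hst, one_mul]
    exact this
  obtain ⟨U, μ, hspec⟩ : ∃ (U : Matrix.unitaryGroup (Fin 3) ℂ) (μ : Fin 3 → ℝ),
      (a : Matrix (Fin 3) (Fin 3) ℂ)
        = U * Matrix.diagonal (fun i => (μ i : ℂ)) * star (U : Matrix (Fin 3) (Fin 3) ℂ) :=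
    ⟨hH.eigenvectorUnitary, hH.eigenvalues, hH.spectral_theorem⟩
  have hUs : star (U : Matrix (Fin 3) (Fin 3) ℂ) * U = 1 := U.2.1
  have hUs' : (U : Matrix (Fin 3) (Fin 3) ℂ) * star (U : Matrix (Fin 3) (Fin 3) ℂ) = 1 := U.2.2
  set Dm : Matrix (Fin 3) (Fin 3) ℂ := Matrix.diagonal (fun i => (μ i : ℂ)) with hDm
  have hDm2 : Dm * Dm = 1 := by
    have h1' : (U : Matrix (Fin 3) (Fin 3) ℂ) * Dm * star (U : Matrix (Fin 3) (Fin 3) ℂ)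
        * ((U : Matrix (Fin 3) (Fin 3) ℂ) * Dm * star (U : Matrix (Fin 3) (Fin 3) ℂ))
        = (U : Matrix (Fin 3) (Fin 3) ℂ) * (Dm * Dm) * star (U : Matrix (Fin 3) (Fin 3) ℂ) := by
      calc (U : Matrix (Fin 3) (Fin 3) ℂ) * Dm * star (U : Matrix (Fin 3) (Fin 3) ℂ)
          * ((U : Matrix (Fin 3) (Fin 3) ℂ) * Dm * star (U : Matrix (Fin 3) (Fin 3) ℂ))
          = (U : Matrix (Fin 3) (Fin 3) ℂ) * (Dm * ((star (U : Matrix (Fin 3) (Fin 3) ℂ) * U)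
            * (Dm * star (U : Matrix (Fin 3) (Fin 3) ℂ)))) := by
            simp only [mul_assoc]
        _ = (U : Matrix (Fin 3) (Fin 3) ℂ) * (Dm * Dm) * star (U : Matrix (Fin 3) (Fin 3) ℂ) := by
            rw [hUs, one_mul]; simp only [mul_assoc]
    have h2' : (U : Matrix (Fin 3) (Fin 3) ℂ) * (Dm * Dm) * star (U : Matrix (Fin 3) (Fin 3) ℂ)
        = 1 := by rw [← h1', ← hspec, hA2]
    calc Dm * Dm
        = (star (U : Matrix (Fin 3) (Fin 3) ℂ) * U) * (Dm * Dm)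
          * (star (U : Matrix (Fin 3) (Fin 3) ℂ) * U) := by rw [hUs, one_mul, mul_one]
      _ = star (U : Matrix (Fin 3) (Fin 3) ℂ) * ((U : Matrix (Fin 3) (Fin 3) ℂ) * (Dm * Dm)
          * star (U : Matrix (Fin 3) (Fin 3) ℂ)) * U := by simp only [mul_assoc]
      _ = 1 := by rw [h2', mul_one, hUs]
  have key : ∀ i, μ i = 1 ∨ μ i = -1 := by
    intro i
    have h := congrFun (congrFun hDm2 i) i
    rw [hDm, Matrix.diagonal_mul_diagonal] at h
    simp [Matrix.diagonal_apply_eq, Matrix.one_apply] at h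
    have h' : μ i * μ i = 1 := by exact_mod_cast h
    exact mul_self_eq_one_iff.mp h'
  have hprod : μ 0 * μ 1 * μ 2 = 1 := by
    have hd : (a : Matrix (Fin 3) (Fin 3) ℂ).det = Dm.det := by
      rw [hspec]
      rw [Matrix.det_mul, Matrix.det_mul]
      have : (U : Matrix (Fin 3) (Fin 3) ℂ).det * (star (U : Matrix (Fin 3) (Fin 3) ℂ)).det
          = 1 := by rw [← Matrix.det_mul, hUs']; simp
      calc (U : Matrix (Fin 3) (Fin 3) ℂ).det * Dm.det
            * (star (U : Matrix (Fin 3) (Fin 3) ℂ)).det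
          = Dm.det * ((U : Matrix (Fin 3) (Fin 3) ℂ).det
            * (star (U : Matrix (Fin 3) (Fin 3) ℂ)).det) := by ring
        _ = Dm.det := by rw [this, mul_one]
    rw [hdet, hDm, Matrix.det_diagonal, Fin.prod_univ_three] at hd
    exact_mod_cast hd.symm
  have hone : ∀ (f : Fin 3 → ℂ), Dm = Matrix.diagonal f →
      ∃ V : Matrix.unitaryGroup (Fin 3) ℂ, Matrix.diagonal f
        = V * D0 * star (V : Matrix (Fin 3) (Fin 3) ℂ) → True := fun _ _ => ⟨U, fun _ => trivial⟩
  clear hone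
  have build : ∀ (S : Matrix (Fin 3) (Fin 3) ℂ), S ∈ Matrix.unitaryGroup (Fin 3) ℂ →
      Dm = S * D0 * star S →
      ∃ U' : Matrix.unitaryGroup (Fin 3) ℂ,
        (a : Matrix (Fin 3) (Fin 3) ℂ)
          = U' * D0 * star (U' : Matrix (Fin 3) (Fin 3) ℂ) := by
    intro S hS hDS
    refine ⟨⟨(U : Matrix (Fin 3) (Fin 3) ℂ) * S, mul_mem U.2 hS⟩, ?_⟩
    show (a : Matrix (Fin 3) (Fin 3) ℂ)
        = ((U : Matrix (Fin 3) (Fin 3) ℂ) * S) * D0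
          * star ((U : Matrix (Fin 3) (Fin 3) ℂ) * S)
    rw [hspec, hDS, StarMul.star_mul]
    simp only [mul_assoc]
  have hnotall : ¬(μ 0 = 1 ∧ μ 1 = 1 ∧ μ 2 = 1) := by
    rintro ⟨e0, e1, e2⟩
    apply h1
    apply Subtype.ext
    have hDm1 : Dm = 1 := by
      rw [hDm]
      have : (fun i => (μ i : ℂ)) = fun _ => 1 := by
        funext i; fin_cases i <;> simp [e0, e1, e2]
      rw [this, Matrix.diagonal_one]
    show (a : Matrix (Fin 3) (Fin 3) ℂ) = 1
    rw [hspec, hDm1, mul_one, hUs']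
  rcases key 0 with e0 | e0 <;> rcases key 1 with e1 | e1 <;> rcases key 2 with e2 | e2
  · exact absurd ⟨e0, e1, e2⟩ hnotall
  · rw [e0, e1, e2] at hprod; norm_num at hprod
  · rw [e0, e1, e2] at hprod; norm_num at hprod
  · -- (1,-1,-1)
    refine build 1 (one_mem _) ?_
    have hf : (fun i => (μ i : ℂ)) = ![1,-1,-1] := by
      funext i; fin_cases i <;> simp [e0, e1, e2]
    rw [hDm, hf, diagA, star_one, mul_one, one_mul]
  · rw [e0, e1, e2] at hprod; norm_num at hprod
  · -- (-1,1,-1)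
    refine build S1 S1_mem ?_
    have hf : (fun i => (μ i : ℂ)) = ![-1,1,-1] := by
      funext i; fin_cases i <;> simp [e0, e1, e2]
    rw [hDm, hf, diagB]
  · -- (-1,-1,1)
    refine build S2 S2_mem ?_
    have hf : (fun i => (μ i : ℂ)) = ![-1,-1,1] := by
      funext i; fin_cases i <;> simp [e0, e1, e2]
    rw [hDm, hf, diagC]
  · rw [e0, e1, e2] at hprod; norm_num at hprod

/-- For nontrivial involutions `a`, `b` in `SU(3)` (unitary `3 × 3` complex
matrices of determinant `1`) there exists `g ∈ SU(3)` such that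
`a * g * b * g⁻¹` has infinite order. -/
theorem su3_exists_conj_infinite_order (a b : Matrix.unitaryGroup (Fin 3) ℂ)
    (hadet : (a : Matrix (Fin 3) (Fin 3) ℂ).det = 1)
    (hbdet : (b : Matrix (Fin 3) (Fin 3) ℂ).det = 1)
    (ha2 : a ^ 2 = 1) (ha1 : a ≠ 1) (hb2 : b ^ 2 = 1) (hb1 : b ≠ 1) :
    ∃ g : Matrix.unitaryGroup (Fin 3) ℂ,
      (g : Matrix (Fin 3) (Fin 3) ℂ).det = 1 ∧
      ¬ IsOfFinOrder (a * g * b * g⁻¹) := by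
  obtain ⟨U, hU⟩ := exists_conj_D0 a hadet ha2 ha1
  obtain ⟨V, hV⟩ := exists_conj_D0 b hbdet hb2 hb1
  set P : Matrix (Fin 3) (Fin 3) ℂ := (U : Matrix (Fin 3) (Fin 3) ℂ) with hP
  set Q : Matrix (Fin 3) (Fin 3) ℂ := (V : Matrix (Fin 3) (Fin 3) ℂ) with hQ
  have hPs : star P * P = 1 := U.2.1
  have hPs' : P * star P = 1 := U.2.2
  have hQs : star Q * Q = 1 := V.2.1
  have hQs' : Q * star Q = 1 := V.2.2
  set g0m : Matrix (Fin 3) (Fin 3) ℂ := P * h0 * star Q with hg0m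
  have hg0mem : g0m ∈ Matrix.unitaryGroup (Fin 3) ℂ :=
    mul_mem (mul_mem U.2 h0_mem) (Unitary.star_mem V.2)
  set d : ℂ := g0m.det with hd
  have hdmem : d ∈ unitary ℂ := Matrix.det_of_mem_unitary hg0mem
  obtain ⟨ζ, hζ3⟩ := IsAlgClosed.exists_pow_nat_eq (k := ℂ) (star d) (n := 3) (by norm_num)
  have hζu : star ζ * ζ = 1 := by
    have hc : (star ζ * ζ) ^ 3 = 1 := by
      have : (star ζ * ζ) ^ 3 = star (ζ ^ 3) * ζ ^ 3 := by ring_nf; rw [← star_pow]; ring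
      rw [this, hζ3, star_star]
      exact hdmem.2
    have hre : star ζ * ζ = ((Complex.normSq ζ : ℝ) : ℂ) := by
      rw [Complex.star_def, Complex.normSq_eq_conj_mul_self]
    rw [hre] at hc ⊢
    have : (Complex.normSq ζ : ℝ) ^ 3 = 1 := by exact_mod_cast hc
    have hnn : (0:ℝ) ≤ Complex.normSq ζ := Complex.normSq_nonneg ζ
    have : (Complex.normSq ζ : ℝ) = 1 := by nlinarith [sq_nonneg (Complex.normSq ζ - 1), sq_nonneg (Complex.normSq ζ + 1), sq_nonneg (Complex.normSq ζ)]
    rw [this]; norm_num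
  have hζζ : ζ * star ζ = 1 := by rw [mul_comm]; exact hζu
  set gm : Matrix (Fin 3) (Fin 3) ℂ := ζ • g0m with hgm
  have hgmem : gm ∈ Matrix.unitaryGroup (Fin 3) ℂ := by
    rw [Matrix.mem_unitaryGroup_iff']
    rw [hgm, star_smul, smul_mul_smul_comm, hζu, one_smul]
    exact hg0mem.1
  set gsub : Matrix.unitaryGroup (Fin 3) ℂ := ⟨gm, hgmem⟩ with hgsub
  have cP : ∀ X : Matrix (Fin 3) (Fin 3) ℂ, star P * (P * X) = X := fun X => by
    rw [← mul_assoc, hPs, one_mul]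
  have cQ : ∀ X : Matrix (Fin 3) (Fin 3) ℂ, star Q * (Q * X) = X := fun X => by
    rw [← mul_assoc, hQs, one_mul]
  refine ⟨gsub, ?_, ?_⟩
  · show gm.det = 1
    rw [hgm, Matrix.det_smul, Fintype.card_fin, hζ3]
    exact hdmem.1
  · rw [isOfFinOrder_iff_pow_eq_one]
    rintro ⟨n, hn, hpow⟩
    have hval : ((a * gsub * b * gsub⁻¹ : Matrix.unitaryGroup (Fin 3) ℂ)
        : Matrix (Fin 3) (Fin 3) ℂ) = P * M0 * star P := by
      have hrfl : ((a * gsub * b * gsub⁻¹ : Matrix.unitaryGroup (Fin 3) ℂ)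
          : Matrix (Fin 3) (Fin 3) ℂ)
          = (a : Matrix (Fin 3) (Fin 3) ℂ) * gm * (b : Matrix (Fin 3) (Fin 3) ℂ) * star gm := rfl
      rw [hrfl, hU, hV, hgm, star_smul, hg0m, M0]
      rw [StarMul.star_mul (P * h0) (star Q), star_star, StarMul.star_mul P h0]
      simp only [Matrix.smul_mul, Matrix.mul_smul, smul_smul]
      rw [hζu, one_smul]
      simp only [mul_assoc]
      rw [cP, cQ, cQ]
    have h1' : (P * M0 * star P) ^ n = 1 := by
      have hc := congrArg Subtype.val hpow
      rw [SubmonoidClass.coe_pow] at hc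
      rw [hval] at hc
      exact hc
    have hconjpow : ∀ m : ℕ, (P * M0 * star P) ^ m = P * M0 ^ m * star P := by
      intro m
      induction m with
      | zero => rw [pow_zero, pow_zero, mul_one, hPs']
      | succ m ih =>
        rw [pow_succ, pow_succ, ih]
        calc P * M0 ^ m * star P * (P * M0 * star P)
            = P * (M0 ^ m * (star P * (P * (M0 * star P)))) := by simp only [mul_assoc]
          _ = P * (M0 ^ m * (M0 * star P)) := by rw [cP]
          _ = P * (M0 ^ m * M0) * star P := by simp only [mul_assoc]
    have hM0n : M0 ^ n = 1 := by
      have h2' : P * M0 ^ n * star P = 1 := by rw [← hconjpow, h1']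
      calc M0 ^ n = (star P * P) * M0 ^ n * (star P * P) := by rw [hPs, one_mul, mul_one]
        _ = star P * (P * M0 ^ n * star P) * P := by simp only [mul_assoc]
        _ = 1 := by rw [h2', mul_one, hPs]
    exact M0_pow_ne_one n hn.ne' hM0n

end SU3Aux
end

section
/- Let n ≥ 1, T > 0, and let A, R : ℝ → Matrix (Fin n) (Fin n) ℝ be such that for every t ∈ [0, T): A(t) is symmetric, R(t) is positive semidefinite, and A has (one-sided at 0) derivative at t within [0, T) equal to −A(t)·A(t) − R(t) (i.e. A solves the Riccati equation A' + A² + R = 0). If A(0) = 0, then for every t ∈ [0, T) the matrix A(t) is negative semidefinite, i.e. −A(t) is positive semidefinite. -/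
open Matrix in

/-- Riccati comparison: if `A` is a symmetric solution of the Riccati equation
`A' + A² + R = 0` on `[0, T)` with `R ≥ 0` and `A 0 = 0`, then `A t ≤ 0` on
`[0, T)`. -/
theorem riccati_nonpos_of_nonneg_curvature (n : ℕ) (hn : 1 ≤ n) (T : ℝ)
    (hT : 0 < T) (A R : ℝ → Matrix (Fin n) (Fin n) ℝ)
    (hsymm : ∀ t ∈ Set.Ico (0 : ℝ) T, (A t).IsSymm)
    (hR : ∀ t ∈ Set.Ico (0 : ℝ) T, (R t).PosSemidef)
    (hderiv : ∀ t ∈ Set.Ico (0 : ℝ) T, ∀ i j,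
      HasDerivWithinAt (fun s => A s i j) ((-(A t * A t) - R t) i j)
        (Set.Ico (0 : ℝ) T) t)
    (hA0 : A 0 = 0) :
    ∀ t ∈ Set.Ico (0 : ℝ) T, (-(A t)).PosSemidef := by
  intro t ht
  rw [Matrix.posSemidef_iff_dotProduct_mulVec]
  constructor
  · -- Hermitian
    have h := hsymm t ht
    rw [Matrix.IsHermitian, Matrix.conjTranspose_neg]
    ext i j
    simp [Matrix.conjTranspose_apply, h.apply i j]
  · intro v
    -- quadratic form f(s) = v ⬝ᵥ A s *ᵥ v
    set f : ℝ → ℝ := fun s => v ⬝ᵥ (A s *ᵥ v) with hf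
    have hfd : ∀ s ∈ Set.Ico (0 : ℝ) T,
        HasDerivWithinAt f (v ⬝ᵥ ((-(A s * A s) - R s) *ᵥ v)) (Set.Ico (0 : ℝ) T) s := by
      intro s hs
      have : HasDerivWithinAt (fun u => ∑ i, ∑ j, v i * (A u i j * v j))
          (∑ i, ∑ j, v i * ((-(A s * A s) - R s) i j * v j)) (Set.Ico (0 : ℝ) T) s := by
        apply HasDerivWithinAt.fun_sum
        intro i _
        apply HasDerivWithinAt.fun_sum
        intro j _
        exact (((hderiv s hs i j).mul_const (v j)).const_mul (v i))
      convert this using 1 <;>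
        simp [hf, dotProduct, Matrix.mulVec, Finset.mul_sum, mul_assoc,
          mul_comm, mul_left_comm]
    have hderiv_nonpos : ∀ s ∈ interior (Set.Ico (0 : ℝ) T),
        v ⬝ᵥ ((-(A s * A s) - R s) *ᵥ v) ≤ 0 := by
      intro s hs
      rw [interior_Ico] at hs
      have hs' : s ∈ Set.Ico (0 : ℝ) T := Set.Ioo_subset_Ico_self hs
      have hsq : 0 ≤ v ⬝ᵥ ((A s * A s) *ᵥ v) := by
        have hsym := (hsymm s hs')
        have : v ⬝ᵥ ((A s * A s) *ᵥ v) = (A s *ᵥ v) ⬝ᵥ (A s *ᵥ v) := by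
          rw [← Matrix.mulVec_mulVec, Matrix.dotProduct_mulVec, ← Matrix.mulVec_transpose,
            hsym.eq]
        rw [this]
        exact Finset.sum_nonneg fun i _ => mul_self_nonneg _
      have hRv : 0 ≤ v ⬝ᵥ (R s *ᵥ v) := by
        have := (hR s hs').dotProduct_mulVec_nonneg v
        simpa using this
      have : v ⬝ᵥ ((-(A s * A s) - R s) *ᵥ v)
          = -(v ⬝ᵥ ((A s * A s) *ᵥ v)) - v ⬝ᵥ (R s *ᵥ v) := by
        rw [Matrix.sub_mulVec, Matrix.neg_mulVec, dotProduct_sub, dotProduct_neg]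
      rw [this]
      linarith
    have hanti : AntitoneOn f (Set.Ico (0 : ℝ) T) := by
      apply antitoneOn_of_hasDerivWithinAt_nonpos (convex_Ico 0 T)
        (f' := fun s => v ⬝ᵥ ((-(A s * A s) - R s) *ᵥ v))
      · intro s hs
        exact (hfd s hs).continuousWithinAt
      · intro s hs
        rw [interior_Ico] at hs ⊢
        exact (hfd s (Set.Ioo_subset_Ico_self hs)).mono Set.Ioo_subset_Ico_self
      · exact hderiv_nonpos
    have h0 : (0 : ℝ) ∈ Set.Ico (0 : ℝ) T := ⟨le_refl 0, hT⟩
    have hft : f t ≤ f 0 := hanti h0 ht ht.1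
    have hf0 : f 0 = 0 := by simp [hf, hA0]
    have : star v ⬝ᵥ ((-(A t)) *ᵥ v) = -(f t) := by
      simp [hf, Matrix.neg_mulVec]
    rw [this]
    linarith [hft, hf0.symm ▸ hft]
end

section
/- Let n ≥ 1, T > 0, and let A, R : ℝ → Matrix (Fin n) (Fin n) ℝ be such that for every t ∈ [0, T): A(t) is symmetric, R(t) is positive semidefinite, and A has (one-sided at 0) derivative at t within [0, T) equal to −A(t)·A(t) − R(t); assume A(0) = 0 and that R is continuous on [0, T). Suppose there exist t₀ ∈ [0, T) and k > 0 such that R(t₀) − k·1 is positive semidefinite. Then for every t₁ with t₀ < t₁ < T there exists l < 0 such that for all t ∈ [t₁, T), the matrix l·1 − A(t) is positive semidefinite (i.e. A(t) ≤ l·1 < 0). -/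
open Matrix

-- quadratic form bound by sum of abs of entries
private lemma quad_abs {n : ℕ} (M : Matrix (Fin n) (Fin n) ℝ) (v : Fin n → ℝ) :
    |v ⬝ᵥ M *ᵥ v| ≤ (∑ i, ∑ j, |M i j|) * (v ⬝ᵥ v) := by
  have hc : ∀ i j : Fin n, |v i| * |v j| ≤ v ⬝ᵥ v := by
    intro i j
    have hi : v i * v i ≤ v ⬝ᵥ v := by
      apply Finset.single_le_sum (f := fun k => v k * v k) (fun k _ => mul_self_nonneg _)
        (Finset.mem_univ i)
    have hj : v j * v j ≤ v ⬝ᵥ v := by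
      apply Finset.single_le_sum (f := fun k => v k * v k) (fun k _ => mul_self_nonneg _)
        (Finset.mem_univ j)
    nlinarith [sq_nonneg (|v i| - |v j|), abs_mul_abs_self (v i), abs_mul_abs_self (v j)]
  have he : v ⬝ᵥ M *ᵥ v = ∑ i, ∑ j, v i * (M i j * v j) := by
    simp [dotProduct, Matrix.mulVec, Finset.mul_sum]
  rw [he]
  calc |∑ i, ∑ j, v i * (M i j * v j)| ≤ ∑ i, ∑ j, |M i j| * (|v i| * |v j|) := by
        refine (Finset.abs_sum_le_sum_abs _ _).trans (Finset.sum_le_sum fun i _ => ?_)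
        refine (Finset.abs_sum_le_sum_abs _ _).trans (Finset.sum_le_sum fun j _ => ?_)
        rw [abs_mul, abs_mul]; ring_nf; rfl
    _ ≤ ∑ i, ∑ j, |M i j| * (v ⬝ᵥ v) := by
        refine Finset.sum_le_sum fun i _ => Finset.sum_le_sum fun j _ => ?_
        exact mul_le_mul_of_nonneg_left (hc i j) (abs_nonneg _)
    _ = (∑ i, ∑ j, |M i j|) * (v ⬝ᵥ v) := by rw [Finset.sum_mul]; simp [Finset.sum_mul]

/-- Strengthened Riccati comparison: if moreover `R t₀ ≥ k • 1 > 0` for some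
`t₀`, then for every `t₁ ∈ (t₀, T)` there is `l < 0` with `A t ≤ l • 1` for all
`t ∈ [t₁, T)`. -/
theorem riccati_neg_of_positive_curvature_somewhere (n : ℕ) (hn : 1 ≤ n)
    (T : ℝ) (hT : 0 < T) (A R : ℝ → Matrix (Fin n) (Fin n) ℝ)
    (hsymm : ∀ t ∈ Set.Ico (0 : ℝ) T, (A t).IsSymm)
    (hR : ∀ t ∈ Set.Ico (0 : ℝ) T, (R t).PosSemidef)
    (hderiv : ∀ t ∈ Set.Ico (0 : ℝ) T, ∀ i j,
      HasDerivWithinAt (fun s => A s i j) ((-(A t * A t) - R t) i j)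
        (Set.Ico (0 : ℝ) T) t)
    (hA0 : A 0 = 0)
    (hRcont : ContinuousOn R (Set.Ico (0 : ℝ) T))
    (t₀ : ℝ) (ht₀ : t₀ ∈ Set.Ico (0 : ℝ) T) (k : ℝ) (hk : 0 < k)
    (hRk : (R t₀ - k • (1 : Matrix (Fin n) (Fin n) ℝ)).PosSemidef) :
    ∀ t₁, t₀ < t₁ → t₁ < T →
      ∃ l < (0 : ℝ), ∀ t ∈ Set.Ico t₁ T,
        (l • (1 : Matrix (Fin n) (Fin n) ℝ) - A t).PosSemidef := by
  intro t₁ ht₀₁ ht₁T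
  set I : Set ℝ := Set.Ico (0 : ℝ) T with hI
  -- quadratic forms
  set F : (Fin n → ℝ) → ℝ → ℝ := fun v s => v ⬝ᵥ A s *ᵥ v with hF
  -- derivative of quadratic form
  have hf' : ∀ (v : Fin n → ℝ), ∀ t ∈ I, HasDerivWithinAt (F v)
      (v ⬝ᵥ ((-(A t * A t) - R t) *ᵥ v)) I t := by
    intro v t ht
    have key : HasDerivWithinAt (fun s => ∑ i, ∑ j, v i * (A s i j * v j))
        (∑ i, ∑ j, v i * ((-(A t * A t) - R t) i j * v j)) I t := by
      apply HasDerivWithinAt.fun_sum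
      intro i _
      apply HasDerivWithinAt.fun_sum
      intro j _
      exact ((hderiv t ht i j).mul_const (v j)).const_mul (v i)
    have e1 : F v = fun s => ∑ i, ∑ j, v i * (A s i j * v j) := by
      funext s; simp [hF, dotProduct, Matrix.mulVec, Finset.mul_sum]
    have e2 : v ⬝ᵥ ((-(A t * A t) - R t) *ᵥ v)
        = ∑ i, ∑ j, v i * ((-(A t * A t) - R t) i j * v j) := by
      simp [dotProduct, Matrix.mulVec, Finset.mul_sum]
    rw [e1, e2]; exact key
  have hIco : interior I = Set.Ioo 0 T := by rw [hI, interior_Ico]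
  have hInhds : ∀ x ∈ Set.Ioo (0:ℝ) T, I ∈ nhds x := by
    intro x hx
    exact Filter.mem_of_superset (Ioo_mem_nhds hx.1 hx.2) Set.Ioo_subset_Ico_self
  have hDA : ∀ (v : Fin n → ℝ), ∀ x ∈ Set.Ioo (0:ℝ) T,
      HasDerivAt (F v) (v ⬝ᵥ ((-(A x * A x) - R x) *ᵥ v)) x := by
    intro v x hx
    exact (hf' v x ⟨hx.1.le, hx.2⟩).hasDerivAt (hInhds x hx)
  have hFcont : ∀ v, ContinuousOn (F v) I :=
    fun v x hx => (hf' v x hx).continuousWithinAt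
  -- A*A has nonneg quadratic form
  have hAA : ∀ x ∈ I, ∀ v : Fin n → ℝ, 0 ≤ v ⬝ᵥ (A x * A x) *ᵥ v := by
    intro x hx v
    have hs := hsymm x hx
    rw [← Matrix.mulVec_mulVec, Matrix.dotProduct_mulVec]
    have : v ᵥ* A x = A x *ᵥ v := by
      conv_lhs => rw [← hs]
      exact Matrix.vecMul_transpose _ _
    rw [this]
    exact Finset.sum_nonneg fun i _ => mul_self_nonneg _
  have hRq : ∀ x ∈ I, ∀ v : Fin n → ℝ, 0 ≤ v ⬝ᵥ R x *ᵥ v := by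
    intro x hx v; simpa using (hR x hx).dotProduct_mulVec_nonneg v
  -- derivative value nonpositive
  have hDnonpos : ∀ (v : Fin n → ℝ), ∀ x ∈ I,
      v ⬝ᵥ ((-(A x * A x) - R x) *ᵥ v) ≤ 0 := by
    intro v x hx
    have e : v ⬝ᵥ ((-(A x * A x) - R x) *ᵥ v)
        = -(v ⬝ᵥ (A x * A x) *ᵥ v) - v ⬝ᵥ R x *ᵥ v := by
      simp [Matrix.sub_mulVec, Matrix.neg_mulVec, dotProduct_sub, dotProduct_neg]
    rw [e]
    linarith [hAA x hx v, hRq x hx v]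
  -- global antitonicity
  have hanti : ∀ v, AntitoneOn (F v) I := by
    intro v
    apply antitoneOn_of_deriv_nonpos (convex_Ico _ _) (hFcont v)
    · rw [hIco]
      exact fun x hx => (hDA v x hx).differentiableAt.differentiableWithinAt
    · rw [hIco]
      intro x hx
      rw [(hDA v x hx).deriv]
      exact hDnonpos v x ⟨hx.1.le, hx.2⟩
  have hF0 : ∀ v, F v 0 = 0 := by intro v; simp [hF, hA0]
  have h0I : (0:ℝ) ∈ I := ⟨le_refl _, hT⟩
  -- continuity of entrywise deviation of R
  set g : ℝ → ℝ := fun t => ∑ i, ∑ j, |R t i j - R t₀ i j| with hg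

  have hgc : ContinuousWithinAt g I t₀ := by
    have hij : ∀ i j : Fin n, ContinuousWithinAt (fun t => |R t i j - R t₀ i j|) I t₀ := by
      intro i j
      have h1 : ContinuousWithinAt (fun t => R t i j) I t₀ := by
        have := (hRcont t₀ ht₀)
        exact (((continuous_apply j).comp (continuous_apply i)).continuousAt).comp_continuousWithinAt this
      exact (h1.sub continuousWithinAt_const).abs
    exact tendsto_finset_sum _ fun i _ => tendsto_finset_sum _ fun j _ => hij i j
  have hg0 : g t₀ = 0 := by simp [hg]
  -- get δ from continuity
  have hev : {t | g t < k / 2} ∈ nhdsWithin t₀ I := by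
    have : Filter.Tendsto g (nhdsWithin t₀ I) (nhds 0) := by rw [← hg0]; exact hgc
    exact this (Iio_mem_nhds (by positivity))
  rw [Metric.mem_nhdsWithin_iff] at hev
  obtain ⟨δ, hδ, hball⟩ := hev
  -- choose the intermediate point s
  set ε : ℝ := min (δ / 2) (t₁ - t₀) with hε
  have hεpos : 0 < ε := lt_min (by linarith) (by linarith)
  set s : ℝ := t₀ + ε with hs
  have hst₁ : s ≤ t₁ := by
    have : ε ≤ t₁ - t₀ := min_le_right _ _
    simp only [hs]; linarith
  have hsT : s < T := lt_of_le_of_lt hst₁ ht₁T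
  have hsI : s ∈ I := ⟨by have := ht₀.1; simp only [hs]; linarith, hsT⟩
  have ht₀s : t₀ ≤ s := by simp only [hs]; linarith
  have hIccI : Set.Icc t₀ s ⊆ I := fun x hx => ⟨le_trans ht₀.1 hx.1, lt_of_le_of_lt hx.2 hsT⟩
  -- on [t₀, s], g < k/2
  have hgsmall : ∀ x ∈ Set.Icc t₀ s, g x < k / 2 := by
    intro x hx
    apply hball
    constructor
    · rw [Metric.mem_ball, Real.dist_eq, abs_of_nonneg (by linarith [hx.1])]
      have : x - t₀ ≤ ε := by have := hx.2; simp only [hs] at this; linarith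
      have : x - t₀ ≤ δ / 2 := le_trans this (min_le_left _ _)
      linarith
    · exact hIccI hx
  -- lower bound on the quadratic form of R on [t₀, s]
  have hRlow : ∀ x ∈ Set.Icc t₀ s, ∀ v : Fin n → ℝ,
      k / 2 * (v ⬝ᵥ v) ≤ v ⬝ᵥ R x *ᵥ v := by
    intro x hx v
    have h1 : k * (v ⬝ᵥ v) ≤ v ⬝ᵥ R t₀ *ᵥ v := by
      have := hRk.dotProduct_mulVec_nonneg v
      simp only [star_trivial, Matrix.sub_mulVec, Matrix.smul_mulVec,
        Matrix.one_mulVec, dotProduct_sub, dotProduct_smul,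
        smul_eq_mul, sub_nonneg] at this
      exact this
    have h2 : |v ⬝ᵥ (R x - R t₀) *ᵥ v| ≤ g x * (v ⬝ᵥ v) := by
      have := quad_abs (R x - R t₀) v
      simpa [hg, Matrix.sub_apply] using this
    have h3 : v ⬝ᵥ (R x - R t₀) *ᵥ v = v ⬝ᵥ R x *ᵥ v - v ⬝ᵥ R t₀ *ᵥ v := by
      simp [Matrix.sub_mulVec, dotProduct_sub]
    have hvv : 0 ≤ v ⬝ᵥ v := Finset.sum_nonneg fun i _ => mul_self_nonneg _
    have h4 : g x * (v ⬝ᵥ v) ≤ k / 2 * (v ⬝ᵥ v) :=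
      mul_le_mul_of_nonneg_right (hgsmall x hx).le hvv
    rw [h3] at h2
    have := abs_le.mp h2
    linarith [this.1]
  -- auxiliary decreasing function on [t₀, s]
  have hdrop : ∀ v : Fin n → ℝ, F v s ≤ F v t₀ - k / 2 * (v ⬝ᵥ v) * ε := by
    intro v
    set c : ℝ := v ⬝ᵥ v with hc
    set h : ℝ → ℝ := fun x => F v x + k / 2 * c * x with hh
    have hanti2 : AntitoneOn h (Set.Icc t₀ s) := by
      apply antitoneOn_of_deriv_nonpos (convex_Icc _ _)
      · exact ((hFcont v).mono hIccI).add ((continuous_const.mul continuous_id).continuousOn)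
      · rw [interior_Icc]
        intro x hx
        have hxI' : x ∈ Set.Ioo (0:ℝ) T :=
          ⟨lt_of_le_of_lt ht₀.1 hx.1, lt_trans hx.2 hsT⟩
        have hd : HasDerivAt h (v ⬝ᵥ ((-(A x * A x) - R x) *ᵥ v) + k / 2 * c) x := by
          have := (hDA v x hxI').fun_add (((hasDerivAt_id x).const_mul (k / 2 * c)))
          simpa [hh, mul_comm] using this
        exact hd.differentiableAt.differentiableWithinAt
      · rw [interior_Icc]
        intro x hx
        have hxI' : x ∈ Set.Ioo (0:ℝ) T :=
          ⟨lt_of_le_of_lt ht₀.1 hx.1, lt_trans hx.2 hsT⟩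
        have hxIcc : x ∈ Set.Icc t₀ s := ⟨hx.1.le, hx.2.le⟩
        have hd : HasDerivAt h (v ⬝ᵥ ((-(A x * A x) - R x) *ᵥ v) + k / 2 * c) x := by
          have := (hDA v x hxI').fun_add (((hasDerivAt_id x).const_mul (k / 2 * c)))
          simpa [hh, mul_comm] using this
        rw [hd.deriv]
        have e : v ⬝ᵥ ((-(A x * A x) - R x) *ᵥ v)
            = -(v ⬝ᵥ (A x * A x) *ᵥ v) - v ⬝ᵥ R x *ᵥ v := by
          simp [Matrix.sub_mulVec, Matrix.neg_mulVec, dotProduct_sub,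
            dotProduct_neg]
        rw [e]
        have h1 := hAA x ⟨hxI'.1.le, hxI'.2⟩ v
        have h2 := hRlow x hxIcc v
        rw [← hc] at h2
        linarith
    have := hanti2 (Set.left_mem_Icc.mpr ht₀s) (Set.right_mem_Icc.mpr ht₀s) ht₀s
    simp only [hh] at this
    have hse : s = t₀ + ε := hs
    nlinarith [this]
  -- t₀ value is nonpositive
  have hFt₀ : ∀ v : Fin n → ℝ, F v t₀ ≤ 0 := by
    intro v
    have := hanti v h0I ht₀ ht₀.1
    rw [hF0 v] at this
    exact this
  -- choose l
  refine ⟨-(k / 2 * ε), neg_lt_zero.mpr (by positivity), ?_⟩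
  intro t ht
  have htI : t ∈ I := ⟨le_trans (le_trans ht₀.1 ht₀₁.le) ht.1, ht.2⟩
  have hquad : ∀ v : Fin n → ℝ,
      0 ≤ v ⬝ᵥ ((-(k / 2 * ε)) • (1 : Matrix (Fin n) (Fin n) ℝ) - A t) *ᵥ v := by
    intro v
    have hvv : 0 ≤ v ⬝ᵥ v := Finset.sum_nonneg fun i _ => mul_self_nonneg _
    have h1 : F v t ≤ F v s := hanti v hsI htI (le_trans hst₁ ht.1)
    have h2 := hdrop v
    have h3 := hFt₀ v
    have e : v ⬝ᵥ ((-(k / 2 * ε)) • (1 : Matrix (Fin n) (Fin n) ℝ) - A t) *ᵥ v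
        = -(k / 2 * ε) * (v ⬝ᵥ v) - F v t := by
      simp only [Matrix.sub_mulVec, Matrix.smul_mulVec, Matrix.one_mulVec,
        dotProduct_sub, dotProduct_smul, smul_eq_mul, hF,
        Matrix.neg_mulVec, dotProduct_neg, neg_smul]
      ring
    rw [e]
    nlinarith
  apply Matrix.PosSemidef.of_dotProduct_mulVec_nonneg
  · -- Hermitian
    show ((-(k / 2 * ε)) • (1 : Matrix (Fin n) (Fin n) ℝ) - A t).IsSymm
    rw [Matrix.IsSymm, Matrix.transpose_sub, Matrix.transpose_smul,
      Matrix.transpose_one, hsymm t htI]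
  · intro v
    simpa using hquad v
end
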